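/- Let ε ≥ 0, and let (V_k) and (Ṽ_k) be sequences with arbitrary initial vectors V_0, Ṽ_0 satisfying V_{k+1} = T V_k and Ṽ_{k+1} = T Ṽ_k + w̃_k with ‖w̃_k‖∞ ≤ ε for all k. Then limsup_{k→∞} ‖V_k − Ṽ_k‖∞ ≤ ε/(1−γ). -/

import Mathlib

open Finset Filter

noncomputable def supNorm {S : Type*} [Fintype S] [Nonempty S] (V : S → ℝ) : ℝ :=
  Finset.univ.sup' Finset.univ_nonempty fun s => |V s|

noncomputable def bellmanT {S A : Type*} [Fintype S] [Fintype A] [Nonempty A]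
    (P R : S → A → S → ℝ) (γ : ℝ) (V : S → ℝ) : S → ℝ :=
  fun s => Finset.univ.sup' Finset.univ_nonempty
    fun a => ∑ s', P s a s' * (R s a s' + γ * V s')

lemma abs_le_supNorm {S : Type*} [Fintype S] [Nonempty S] (V : S → ℝ) (s : S) :
    |V s| ≤ supNorm V :=
  Finset.le_sup' (fun s => |V s|) (Finset.mem_univ s)

lemma supNorm_nonneg {S : Type*} [Fintype S] [Nonempty S] (V : S → ℝ) :
    0 ≤ supNorm V :=
  le_trans (abs_nonneg _) (abs_le_supNorm V (Classical.arbitrary S))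

lemma supNorm_le {S : Type*} [Fintype S] [Nonempty S] {V : S → ℝ} {c : ℝ}
    (h : ∀ s, |V s| ≤ c) : supNorm V ≤ c :=
  Finset.sup'_le _ _ fun s _ => h s

lemma bellman_contraction {S A : Type*} [Fintype S] [Nonempty S] [Fintype A] [Nonempty A]
    (P R : S → A → S → ℝ) (γ : ℝ) (hγ0 : 0 ≤ γ)
    (hP0 : ∀ s a s', 0 ≤ P s a s') (hP1 : ∀ s a, ∑ s', P s a s' = 1)
    (U W : S → ℝ) :
    supNorm (bellmanT P R γ U - bellmanT P R γ W) ≤ γ * supNorm (U - W) := by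
  apply supNorm_le
  intro s
  have key : ∀ (U W : S → ℝ) (a : A),
      (∑ s', P s a s' * (R s a s' + γ * U s'))
        ≤ (∑ s', P s a s' * (R s a s' + γ * W s')) + γ * supNorm (U - W) := by
    intro U W a
    have : ∀ s', P s a s' * (R s a s' + γ * U s')
        ≤ P s a s' * (R s a s' + γ * W s') + P s a s' * (γ * supNorm (U - W)) := by
      intro s'
      rw [← mul_add]
      apply mul_le_mul_of_nonneg_left _ (hP0 s a s')
      have h1 : U s' - W s' ≤ supNorm (U - W) :=
        le_trans (le_abs_self _) (abs_le_supNorm (U - W) s')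
      nlinarith
    calc (∑ s', P s a s' * (R s a s' + γ * U s'))
        ≤ ∑ s', (P s a s' * (R s a s' + γ * W s') + P s a s' * (γ * supNorm (U - W))) :=
          Finset.sum_le_sum fun s' _ => this s'
      _ = (∑ s', P s a s' * (R s a s' + γ * W s')) + (∑ s', P s a s') * (γ * supNorm (U - W)) := by
          rw [Finset.sum_add_distrib, Finset.sum_mul]
      _ = (∑ s', P s a s' * (R s a s' + γ * W s')) + γ * supNorm (U - W) := by
          rw [hP1 s a, one_mul]
  have hUW : bellmanT P R γ U s ≤ bellmanT P R γ W s + γ * supNorm (U - W) := by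
    apply Finset.sup'_le
    intro a _
    exact le_trans (key U W a) (add_le_add_left
      (Finset.le_sup' (fun a => ∑ s', P s a s' * (R s a s' + γ * W s')) (Finset.mem_univ a)) _)
  have hWU : bellmanT P R γ W s ≤ bellmanT P R γ U s + γ * supNorm (U - W) := by
    have := key W U
    have hsym : supNorm (W - U) = supNorm (U - W) := by
      unfold supNorm; congr 1; ext s'; rw [show (W - U) s' = -((U - W) s') by simp, abs_neg]
    apply Finset.sup'_le
    intro a _
    calc (∑ s', P s a s' * (R s a s' + γ * W s'))
        ≤ (∑ s', P s a s' * (R s a s' + γ * U s')) + γ * supNorm (W - U) := key W U a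
      _ ≤ bellmanT P R γ U s + γ * supNorm (U - W) := by
          rw [hsym]
          exact add_le_add_left
            (Finset.le_sup' (fun a => ∑ s', P s a s' * (R s a s' + γ * U s')) (Finset.mem_univ a)) _
  simp only [Pi.sub_apply]
  rw [abs_sub_le_iff]
  constructor <;> linarith

theorem noisy_vi_limsup (n : ℕ) [NeZero n] (A : Type*) [Fintype A] [Nonempty A]
    (P R : Fin n → A → Fin n → ℝ)
    (hP0 : ∀ s a s', 0 ≤ P s a s') (hP1 : ∀ s a, ∑ s', P s a s' = 1)
    (γ : ℝ) (hγ0 : 0 ≤ γ) (hγ1 : γ < 1)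
    (ε : ℝ) (hε : 0 ≤ ε)
    (V Vt : ℕ → Fin n → ℝ) (wt : ℕ → Fin n → ℝ)
    (hV : ∀ k, V (k + 1) = bellmanT P R γ (V k))
    (hVt : ∀ k, Vt (k + 1) = bellmanT P R γ (Vt k) + wt k)
    (hwt : ∀ k, supNorm (wt k) ≤ ε) :
    Filter.limsup (fun k => supNorm (V k - Vt k)) Filter.atTop ≤ ε / (1 - γ) := by
  set d : ℕ → ℝ := fun k => supNorm (V k - Vt k) with hd
  have h1γ : 0 < 1 - γ := by linarith
  have hrec : ∀ k, d (k + 1) ≤ γ * d k + ε := by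
    intro k
    have hcon := bellman_contraction P R γ hγ0 hP0 hP1 (V k) (Vt k)
    apply supNorm_le
    intro s
    have h1 : |bellmanT P R γ (V k) s - bellmanT P R γ (Vt k) s| ≤ γ * d k := by
      have := le_trans (abs_le_supNorm (bellmanT P R γ (V k) - bellmanT P R γ (Vt k)) s) hcon
      simpa using this
    have h2 : |wt k s| ≤ ε := le_trans (abs_le_supNorm _ s) (hwt k)
    have : (V (k+1) - Vt (k+1)) s
        = (bellmanT P R γ (V k) s - bellmanT P R γ (Vt k) s) - wt k s := by
      rw [hV k, hVt k]; simp [sub_eq_add_neg]; ring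
    rw [this]
    calc |(bellmanT P R γ (V k) s - bellmanT P R γ (Vt k) s) - wt k s|
        ≤ |bellmanT P R γ (V k) s - bellmanT P R γ (Vt k) s| + |wt k s| := abs_sub _ _
      _ ≤ γ * d k + ε := add_le_add h1 h2
  have hbound : ∀ k, d k ≤ γ ^ k * d 0 + ε / (1 - γ) := by
    intro k
    induction k with
    | zero => simp; positivity
    | succ k ih =>
      calc d (k + 1) ≤ γ * d k + ε := hrec k
        _ ≤ γ * (γ ^ k * d 0 + ε / (1 - γ)) + ε :=
            add_le_add_left (mul_le_mul_of_nonneg_left ih hγ0) _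
        _ = γ ^ (k + 1) * d 0 + (γ * (ε / (1 - γ)) + ε) := by ring
        _ = γ ^ (k + 1) * d 0 + ε / (1 - γ) := by
            congr 1
            field_simp
            ring
  set g : ℕ → ℝ := fun k => γ ^ k * d 0 + ε / (1 - γ) with hg
  have hgt : Tendsto g atTop (nhds (ε / (1 - γ))) := by
    have : Tendsto (fun k : ℕ => γ ^ k * d 0) atTop (nhds 0) := by
      simpa using (tendsto_pow_atTop_nhds_zero_of_lt_one hγ0 hγ1).mul_const (d 0)
    simpa using this.add_const (ε / (1 - γ))
  have hlim : limsup g atTop = ε / (1 - γ) := hgt.limsup_eq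
  calc limsup d atTop ≤ limsup g atTop := by
        exact Filter.limsup_le_limsup (Eventually.of_forall hbound)
          (isCoboundedUnder_le_of_le atTop fun k => supNorm_nonneg _)
          hgt.isBoundedUnder_le
    _ = ε / (1 - γ) := hlim
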